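/- For real x with 0 < |x| < 1, ∫₀^π θ sin θ / (1 + x⁴ cos⁴ θ) dθ = (π/(2^{5/2} x)) · log((1 + √2 x + x²)/(1 − √2 x + x²)) + (π/(2^{3/2} x)) · arctan(√2 x / (1 − x²)). -/

import Mathlib

open Real intervalIntegral

noncomputable def Frus (t : ℝ) : ℝ :=
  Real.sqrt 2 / 8 * (Real.log (t ^ 2 + Real.sqrt 2 * t + 1) -
      Real.log (t ^ 2 - Real.sqrt 2 * t + 1))
  + Real.sqrt 2 / 4 * (Real.arctan (Real.sqrt 2 * t + 1) + Real.arctan (Real.sqrt 2 * t - 1))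

lemma hs2 : Real.sqrt 2 ^ 2 = 2 := Real.sq_sqrt (by norm_num)

lemma hp_pos (t : ℝ) : 0 < t ^ 2 + Real.sqrt 2 * t + 1 := by
  nlinarith [hs2, sq_nonneg (t + Real.sqrt 2 / 2)]

lemma hq_pos (t : ℝ) : 0 < t ^ 2 - Real.sqrt 2 * t + 1 := by
  nlinarith [hs2, sq_nonneg (t - Real.sqrt 2 / 2)]

lemma hasDerivF (t : ℝ) : HasDerivAt Frus (1 / (1 + t ^ 4)) t := by
  have s := Real.sqrt 2
  have hp := hp_pos t
  have hq := hq_pos t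
  have h1 : HasDerivAt (fun t : ℝ => t ^ 2 + Real.sqrt 2 * t + 1)
      (2 * t + Real.sqrt 2) t := by
    have := ((hasDerivAt_pow 2 t).add ((hasDerivAt_id t).const_mul (Real.sqrt 2))).add_const 1
    convert this using 1; rfl; rfl; rfl; ring
  have h2 : HasDerivAt (fun t : ℝ => t ^ 2 - Real.sqrt 2 * t + 1)
      (2 * t - Real.sqrt 2) t := by
    have := ((hasDerivAt_pow 2 t).sub ((hasDerivAt_id t).const_mul (Real.sqrt 2))).add_const 1
    convert this using 1; rfl; rfl; rfl; ring
  have h3 : HasDerivAt (fun t : ℝ => Real.sqrt 2 * t + 1) (Real.sqrt 2) t := by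
    have := ((hasDerivAt_id t).const_mul (Real.sqrt 2)).add_const 1
    simpa using this
  have h4 : HasDerivAt (fun t : ℝ => Real.sqrt 2 * t - 1) (Real.sqrt 2) t := by
    have := ((hasDerivAt_id t).const_mul (Real.sqrt 2)).sub_const 1
    simpa using this
  have hL1 := (h1.log hp.ne')
  have hL2 := (h2.log hq.ne')
  have hA1 := h3.arctan
  have hA2 := h4.arctan
  have h := (((hL1.sub hL2).const_mul (Real.sqrt 2 / 8)).add
    ((hA1.add hA2).const_mul (Real.sqrt 2 / 4)))
  convert h using 1
  rfl
  rfl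
  rfl
  have h14 : (1 : ℝ) + t ^ 4 = (t ^ 2 + Real.sqrt 2 * t + 1) * (t ^ 2 - Real.sqrt 2 * t + 1) := by
    have := hs2; nlinarith [hs2]
  have ha1 : 1 + (Real.sqrt 2 * t + 1) ^ 2 = 2 * (t ^ 2 + Real.sqrt 2 * t + 1) := by
    nlinarith [hs2]
  have ha2 : 1 + (Real.sqrt 2 * t - 1) ^ 2 = 2 * (t ^ 2 - Real.sqrt 2 * t + 1) := by
    nlinarith [hs2]
  rw [h14, ha1, ha2]
  set s := Real.sqrt 2 with hsdef
  have e2 : s ^ 2 = 2 := hs2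
  have e3 : s ^ 3 = 2 * s := by rw [show s ^ 3 = s ^ 2 * s by ring, e2]
  have e4 : s ^ 4 = 4 := by rw [show s ^ 4 = (s ^ 2) ^ 2 by ring, e2]; norm_num
  have e5 : s ^ 5 = 4 * s := by rw [show s ^ 5 = (s ^ 2) ^ 2 * s by ring, e2]; norm_num
  have e6 : s ^ 6 = 8 := by rw [show s ^ 6 = (s ^ 2) ^ 3 by ring, e2]; norm_num
  have hp' : t * (t + s) + 1 ≠ 0 := by nlinarith [hp]
  have hq' : t * (t - s) + 1 ≠ 0 := by nlinarith [hq]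
  field_simp
  ring_nf
  simp only [e2, e3, e4, e5, e6]
  ring

lemma Frus_odd (t : ℝ) : Frus (-t) = -Frus t := by
  unfold Frus
  have h1 : (-t) ^ 2 + Real.sqrt 2 * (-t) + 1 = t ^ 2 - Real.sqrt 2 * t + 1 := by ring
  have h2 : (-t) ^ 2 - Real.sqrt 2 * (-t) + 1 = t ^ 2 + Real.sqrt 2 * t + 1 := by ring
  have h3 : Real.sqrt 2 * (-t) + 1 = -(Real.sqrt 2 * t - 1) := by ring
  have h4 : Real.sqrt 2 * (-t) - 1 = -(Real.sqrt 2 * t + 1) := by ring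
  rw [h1, h2, h3, h4, Real.arctan_neg, Real.arctan_neg]
  ring

theorem stmt_18 (x : ℝ) (hx : |x| < 1) (hx0 : x ≠ 0) :
    ∫ θ in (0:ℝ)..Real.pi, θ * Real.sin θ / (1 + x ^ 4 * Real.cos θ ^ 4)
      = Real.pi / (2 ^ ((5 : ℝ) / 2) * x) *
          Real.log ((1 + Real.sqrt 2 * x + x ^ 2) / (1 - Real.sqrt 2 * x + x ^ 2))
        + Real.pi / (2 ^ ((3 : ℝ) / 2) * x) *
          Real.arctan (Real.sqrt 2 * x / (1 - x ^ 2)) := by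
  have hx2 : x ^ 2 < 1 := by
    have := sq_abs x
    nlinarith [abs_nonneg x]
  have hden : ∀ θ : ℝ, 0 < 1 + x ^ 4 * Real.cos θ ^ 4 := fun θ => by positivity
  have hcont1 : Continuous fun θ : ℝ => θ * Real.sin θ / (1 + x ^ 4 * Real.cos θ ^ 4) := by
    apply Continuous.div (continuous_id.mul Real.continuous_sin) (by continuity)
      fun θ => (hden θ).ne'
  have hcont2 : Continuous fun θ : ℝ => Real.sin θ / (1 + x ^ 4 * Real.cos θ ^ 4) := by
    apply Continuous.div Real.continuous_sin (by continuity) fun θ => (hden θ).ne'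
  have hcont3 : Continuous fun θ : ℝ =>
      (Real.pi - θ) * Real.sin θ / (1 + x ^ 4 * Real.cos θ ^ 4) := by
    apply Continuous.div ((continuous_const.sub continuous_id).mul Real.continuous_sin)
      (by continuity) fun θ => (hden θ).ne'
  set I := ∫ θ in (0:ℝ)..Real.pi, θ * Real.sin θ / (1 + x ^ 4 * Real.cos θ ^ 4) with hI
  -- symmetry step
  have hsym : (∫ θ in (0:ℝ)..Real.pi,
      (Real.pi - θ) * Real.sin θ / (1 + x ^ 4 * Real.cos θ ^ 4)) = I := by
    have h := intervalIntegral.integral_comp_sub_left (a := (0:ℝ)) (b := Real.pi)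
      (fun θ => θ * Real.sin θ / (1 + x ^ 4 * Real.cos θ ^ 4)) Real.pi
    simp only [sub_self, sub_zero] at h
    rw [hI, ← h]
    apply intervalIntegral.integral_congr
    intro θ _
    simp only
    rw [Real.sin_pi_sub, Real.cos_pi_sub, Even.neg_pow (by decide : Even 4)]
  have h2I : I + I = Real.pi * ∫ θ in (0:ℝ)..Real.pi,
      Real.sin θ / (1 + x ^ 4 * Real.cos θ ^ 4) := by
    nth_rewrite 2 [← hsym]
    rw [← intervalIntegral.integral_add (hcont1.intervalIntegrable _ _)
      (hcont3.intervalIntegrable _ _), ← intervalIntegral.integral_const_mul]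
    apply intervalIntegral.integral_congr
    intro θ _
    simp only
    ring
  -- substitution u = cos θ
  have hcontg : Continuous fun u : ℝ => 1 / (1 + x ^ 4 * u ^ 4) := by
    apply Continuous.div continuous_const (by continuity) fun u => by positivity
  have hsub : (∫ θ in (0:ℝ)..Real.pi, Real.sin θ / (1 + x ^ 4 * Real.cos θ ^ 4))
      = ∫ u in (-1:ℝ)..1, 1 / (1 + x ^ 4 * u ^ 4) := by
    have h := intervalIntegral.integral_comp_mul_deriv (a := (0:ℝ)) (b := Real.pi)
      (f := Real.cos) (f' := fun θ => -Real.sin θ) (g := fun u => 1 / (1 + x ^ 4 * u ^ 4))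
      (fun θ _ => Real.hasDerivAt_cos θ) (Real.continuous_sin.neg.continuousOn) hcontg
    simp only [Real.cos_zero, Real.cos_pi, Function.comp] at h
    have h2 : (∫ θ in (0:ℝ)..Real.pi, 1 / (1 + x ^ 4 * Real.cos θ ^ 4) * (-Real.sin θ))
        = -∫ θ in (0:ℝ)..Real.pi, Real.sin θ / (1 + x ^ 4 * Real.cos θ ^ 4) := by
      rw [← intervalIntegral.integral_neg]
      apply intervalIntegral.integral_congr
      intro θ _
      simp only
      ring
    rw [h2, intervalIntegral.integral_symm (-1) 1] at h
    linarith [h]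
  -- FTC
  have hG : ∀ u : ℝ, HasDerivAt (fun u => (1 / x) * Frus (x * u))
      (1 / (1 + x ^ 4 * u ^ 4)) u := by
    intro u
    have hinner : HasDerivAt (fun u : ℝ => x * u) x u := by
      simpa using (hasDerivAt_id u).const_mul x
    have h := ((hasDerivF (x * u)).comp u hinner).const_mul (1 / x)
    convert h using 1
    rfl
    rfl
    rfl
    have h4 : (x * u) ^ 4 = x ^ 4 * u ^ 4 := by ring
    rw [h4]
    have hne : (0:ℝ) < 1 + x ^ 4 * u ^ 4 := by positivity
    field_simp
  have hfund : (∫ u in (-1:ℝ)..1, 1 / (1 + x ^ 4 * u ^ 4))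
      = (1 / x) * Frus (x * 1) - (1 / x) * Frus (x * (-1)) := by
    exact intervalIntegral.integral_eq_sub_of_hasDerivAt (fun u _ => hG u)
      (hcontg.intervalIntegrable _ _)
  have hval : (∫ u in (-1:ℝ)..1, 1 / (1 + x ^ 4 * u ^ 4)) = (2 / x) * Frus x := by
    rw [hfund, mul_one, show x * (-1) = -x by ring, Frus_odd]
    ring
  have hIval : I = (Real.pi / x) * Frus x := by
    rw [hsub, hval] at h2I
    have : (2:ℝ) * I = Real.pi * ((2 / x) * Frus x) := by linarith [h2I]
    field_simp at this ⊢
    linarith [this]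
  -- simplify Frus x
  have hs := hs2
  have hsne : Real.sqrt 2 ≠ 0 := by positivity
  have hlog : Real.log (x ^ 2 + Real.sqrt 2 * x + 1) - Real.log (x ^ 2 - Real.sqrt 2 * x + 1)
      = Real.log ((1 + Real.sqrt 2 * x + x ^ 2) / (1 - Real.sqrt 2 * x + x ^ 2)) := by
    rw [Real.log_div (by nlinarith [hp_pos x] : (1 + Real.sqrt 2 * x + x ^ 2) ≠ 0)
      (by nlinarith [hq_pos x] : (1 - Real.sqrt 2 * x + x ^ 2) ≠ 0),
      show 1 + Real.sqrt 2 * x + x ^ 2 = x ^ 2 + Real.sqrt 2 * x + 1 by ring,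
      show 1 - Real.sqrt 2 * x + x ^ 2 = x ^ 2 - Real.sqrt 2 * x + 1 by ring]
  have hprod : (Real.sqrt 2 * x + 1) * (Real.sqrt 2 * x - 1) = 2 * x ^ 2 - 1 := by
    linear_combination x ^ 2 * hs2
  have harc : Real.arctan (Real.sqrt 2 * x + 1) + Real.arctan (Real.sqrt 2 * x - 1)
      = Real.arctan (Real.sqrt 2 * x / (1 - x ^ 2)) := by
    rw [Real.arctan_add (by rw [hprod]; nlinarith)]
    congr 1
    rw [hprod, show Real.sqrt 2 * x + 1 + (Real.sqrt 2 * x - 1) = 2 * (Real.sqrt 2 * x) by ring,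
      show (1:ℝ) - (2 * x ^ 2 - 1) = 2 * (1 - x ^ 2) by ring,
      mul_div_mul_left _ _ (two_ne_zero)]
  have h52 : (2:ℝ) ^ ((5:ℝ) / 2) = 4 * Real.sqrt 2 := by
    rw [show (5:ℝ) / 2 = 2 + 1 / 2 by norm_num,
      Real.rpow_add (by norm_num : (0:ℝ) < 2), ← Real.sqrt_eq_rpow]
    norm_num [Real.rpow_two]
  have h32 : (2:ℝ) ^ ((3:ℝ) / 2) = 2 * Real.sqrt 2 := by
    rw [show (3:ℝ) / 2 = 1 + 1 / 2 by norm_num,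
      Real.rpow_add (by norm_num : (0:ℝ) < 2), ← Real.sqrt_eq_rpow]
    norm_num
  rw [hIval, h52, h32]
  unfold Frus
  rw [hlog, harc]
  have h8 : Real.sqrt 2 / 8 = 1 / (4 * Real.sqrt 2) := by
    rw [div_eq_div_iff (by norm_num) (by positivity)]
    linear_combination 4 * hs2
  have h4 : Real.sqrt 2 / 4 = 1 / (2 * Real.sqrt 2) := by
    rw [div_eq_div_iff (by norm_num) (by positivity)]
    linear_combination 2 * hs2
  rw [h8, h4]
  field_simp
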